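/- Let E₀ ⊆ E ⊆ R^d where E is compact with positive Lebesgue measure, contained in a dyadic cube Q₀. For each δ ∈ (0,1) there is a compact set E₀ ⊆ E with |E₀| ≥ (1−δ)|E| such that E₀ is a c-serious subset of E with c = (δ|E|/|Q₀|)^{1/d} / (8 d^{1/2} 3^d); that is, for every x ∈ E₀ and 0 < t < diam E₀ there exists y ∈ E with c·t ≤ |x−y| ≤ t. -/

import Mathlib

open MeasureTheory Metric Set ENNReal

/-- The axis-parallel cube with corner `a` and side length `l`. -/
def cube {d : ℕ} (a : Fin d → ℝ) (l : ℝ) : Set (Fin d → ℝ) :=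
  Set.Icc a (fun i => a i + l)

lemma vol_cube' (d : ℕ) (a : Fin d → ℝ) {l : ℝ} (hl : 0 ≤ l) :
    volume (cube a l) = ENNReal.ofReal (l ^ d) := by
  rw [cube, Real.volume_Icc_pi]
  simp only [add_sub_cancel_left]
  rw [Finset.prod_const, Finset.card_univ, Fintype.card_fin, ENNReal.ofReal_pow hl]

/-- Every compact set `E` of positive measure inside a cube `Q₀` contains, for each `δ ∈ (0,1)`,
a compact subset `E₀` with `|E₀| ≥ (1-δ)|E|` which is a `c`-serious subset of `E` with
`c = (δ|E|/|Q₀|)^{1/d} / (8 √d 3^d)`: for every `x ∈ E₀` and `0 < t < diam E₀` there is `y ∈ E`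
with `c·t ≤ |x-y| ≤ t`. -/
theorem exists_serious_subset (d : ℕ) (hd : 0 < d)
    (a : Fin d → ℝ) (l : ℝ) (hl : 0 < l)
    (E : Set (Fin d → ℝ)) (hE : IsCompact E) (hEQ : E ⊆ cube a l)
    (hpos : 0 < volume E) (δ : ℝ) (hδ : 0 < δ) (hδ1 : δ < 1) :
    ∃ E₀ : Set (Fin d → ℝ), E₀ ⊆ E ∧ IsCompact E₀ ∧
      ENNReal.ofReal (1 - δ) * volume E ≤ volume E₀ ∧
      ∀ x ∈ E₀, ∀ t : ℝ, 0 < t → t < Metric.diam E₀ →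
        ∃ y ∈ E,
          ((δ * (volume E).toReal / (volume (cube a l)).toReal) ^ (1 / (d : ℝ))
              / (8 * Real.sqrt d * 3 ^ d)) * t ≤ dist x y ∧ dist x y ≤ t := by
  classical
  have hQvol : volume (cube a l) = ENNReal.ofReal (l ^ d) := vol_cube' d a hl.le
  have hlpow : (0:ℝ) < l ^ d := pow_pos hl d
  have hQtoReal : (volume (cube a l)).toReal = l ^ d := by
    rw [hQvol, ENNReal.toReal_ofReal hlpow.le]
  have hEfin : volume E ≠ ⊤ := by
    refine ne_top_of_le_ne_top ?_ (measure_mono hEQ)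
    rw [hQvol]; exact ofReal_ne_top
  set m : ℝ := (volume E).toReal with hm
  have hEvol : volume E = ENNReal.ofReal m := (ENNReal.ofReal_toReal hEfin).symm
  have hm0 : 0 < m := ENNReal.toReal_pos hpos.ne' hEfin
  have h3l : (0:ℝ) < (3*l)^d := by positivity
  set γr : ℝ := δ * m / (3*l)^d with hγrdef
  have hγr0 : 0 < γr := by positivity
  set γ : ℝ≥0∞ := ENNReal.ofReal γr with hγdef
  set D : Set (Fin d → ℝ) :=
    {x | ∀ r : ℝ, 0 < r → r ≤ l →
      γ * ENNReal.ofReal ((2*r/5)^d) ≤ volume (E ∩ closedBall x r)} with hDdef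
  have hDclosed : IsClosed D := by
    refine isClosed_of_closure_subset fun x hx r hr hrl => ?_
    have main : ∀ s : ℝ, 0 < s → s < r →
        γ * ENNReal.ofReal ((2*s/5)^d) ≤ volume (E ∩ closedBall x r) := by
      intro s hs hsr
      obtain ⟨y, hyD, hyd⟩ := Metric.mem_closure_iff.1 hx (r - s) (by linarith)
      refine (hyD s hs (by linarith)).trans
        (measure_mono (inter_subset_inter_right _ fun z hz => ?_))
      rw [mem_closedBall] at hz ⊢
      have h1 := dist_triangle z y x
      rw [dist_comm y x] at h1
      linarith
    have tends : Filter.Tendsto (fun s : ℝ => γ * ENNReal.ofReal ((2*s/5)^d))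
        (nhdsWithin r (Iio r)) (nhds (γ * ENNReal.ofReal ((2*r/5)^d))) := by
      refine ENNReal.Tendsto.const_mul ?_ (Or.inr ofReal_ne_top)
      have hcont : Filter.Tendsto (fun s : ℝ => ENNReal.ofReal ((2*s/5)^d)) (nhds r)
          (nhds (ENNReal.ofReal ((2*r/5)^d))) :=
        (ENNReal.continuous_ofReal.tendsto _).comp (Continuous.tendsto (by fun_prop) r)
      exact hcont.mono_left nhdsWithin_le_nhds
    refine le_of_tendsto tends ?_
    filter_upwards [Ioo_mem_nhdsLT_of_mem (Set.mem_Ioc.mpr ⟨hr, le_refl r⟩)] with s hs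
    exact main s hs.1 hs.2
  have hmeasD : MeasurableSet D := hDclosed.measurableSet
  -- measure bound on the bad set
  have hbad : volume (E \ D) ≤ ENNReal.ofReal δ * volume E := by
    have hchoice : ∀ x ∈ E \ D, ∃ r : ℝ, 0 < r ∧ r ≤ l ∧
        volume (E ∩ closedBall x r) < γ * ENNReal.ofReal ((2*r/5)^d) := by
      intro x hx
      have hxD := hx.2
      rw [hDdef, mem_setOf_eq] at hxD
      push_neg at hxD
      obtain ⟨r, hr1, hr2, hr3⟩ := hxD
      exact ⟨r, hr1, hr2, hr3⟩
    choose! ρ hρ0 hρl hρvol using hchoice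
    obtain ⟨u, huB, hdisj, hcov⟩ :=
      Vitali.exists_disjoint_subfamily_covering_enlargement_closedBall
        (E \ D) id (fun x => ρ x / 5) (l / 5)
        (fun x hx => by have := hρl x hx; linarith) 5 (by norm_num)
    simp only [id] at hdisj hcov
    have hucount : u.Countable := by
      refine hdisj.countable_of_nonempty_interior fun b hb => ?_
      have hb0 : 0 < ρ b := hρ0 b (huB hb)
      exact (nonempty_ball.2 (by positivity)).mono ball_subset_interior_closedBall
    have hcover : E \ D ⊆ ⋃ b ∈ u, E ∩ closedBall b (ρ b) := by
      intro x hx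
      obtain ⟨b, hbu, hsub⟩ := hcov x hx
      have hx0 : 0 < ρ x := hρ0 x hx
      have hxmem : x ∈ closedBall x (ρ x / 5) := mem_closedBall_self (by positivity)
      have h5 : (5:ℝ) * (ρ b / 5) = ρ b := by ring
      have hmem := hsub hxmem
      rw [h5] at hmem
      exact mem_biUnion hbu ⟨hx.1, hmem⟩
    have hQ' : ∀ b ∈ u, closedBall (b : Fin d → ℝ) (ρ b / 5) ⊆
        cube (fun i => a i - l) (3*l) := by
      intro b hb y hy
      have hbE : b ∈ cube a l := hEQ (huB hb).1
      rw [mem_closedBall] at hy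
      have hρle : ρ b / 5 ≤ l := by have := hρl b (huB hb); linarith
      constructor <;> intro i
      · have h1 := dist_le_pi_dist y b i
        rw [Real.dist_eq, abs_sub_le_iff] at h1
        have h2 := hbE.1 i
        simp only
        have := h1.2.trans (hy.trans hρle)
        linarith
      · have h1 := dist_le_pi_dist y b i
        rw [Real.dist_eq, abs_sub_le_iff] at h1
        have h2 := hbE.2 i
        simp only at h2 ⊢
        have := h1.1.trans (hy.trans hρle)
        linarith
    have hsum : volume (E \ D) ≤ γ * ENNReal.ofReal ((3*l)^d) := by
      calc volume (E \ D) ≤ ∑' b : u, volume (E ∩ closedBall (b : Fin d → ℝ) (ρ b)) :=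
            (measure_mono hcover).trans (measure_biUnion_le volume hucount _)
        _ ≤ ∑' b : u, γ * ENNReal.ofReal ((2*(ρ (b : Fin d → ℝ))/5)^d) :=
            ENNReal.tsum_le_tsum fun b => (hρvol b (huB b.2)).le
        _ = γ * ∑' b : u, volume (closedBall (b : Fin d → ℝ) (ρ b / 5)) := by
            rw [ENNReal.tsum_mul_left]
            congr 1
            refine tsum_congr fun b => ?_
            have hb0 : 0 < ρ (b : Fin d → ℝ) := hρ0 b (huB b.2)
            rw [Real.volume_pi_closedBall _ (by positivity), Fintype.card_fin]
            congr 2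
            ring
        _ = γ * volume (⋃ b ∈ u, closedBall (b : Fin d → ℝ) (ρ b / 5)) := by
            rw [measure_biUnion hucount hdisj fun b _ => measurableSet_closedBall]
        _ ≤ γ * volume (cube (fun i => a i - l) (3*l)) := by
            gcongr
            exact iUnion₂_subset hQ'
        _ = γ * ENNReal.ofReal ((3*l)^d) := by
            rw [vol_cube' d _ (by linarith)]
    refine hsum.trans_eq ?_
    rw [hγdef, hEvol, ← ENNReal.ofReal_mul hγr0.le, ← ENNReal.ofReal_mul hδ.le]
    congr 1
    rw [hγrdef]
    field_simp
  have hvol : ENNReal.ofReal (1-δ) * volume E ≤ volume (E ∩ D) := by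
    rw [← ENNReal.add_le_add_iff_right
      (show volume (E \ D) ≠ ⊤ from ne_top_of_le_ne_top hEfin (measure_mono diff_subset))]
    calc ENNReal.ofReal (1-δ) * volume E + volume (E \ D)
        ≤ ENNReal.ofReal (1-δ) * volume E + ENNReal.ofReal δ * volume E := by gcongr
      _ = volume E := by
          rw [← add_mul, ← ENNReal.ofReal_add (by linarith) hδ.le]
          norm_num
      _ = volume (E ∩ D) + volume (E \ D) := (measure_inter_add_diff E hmeasD).symm
  refine ⟨E ∩ D, inter_subset_left, hE.inter_right hDclosed, hvol, ?_⟩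
  intro x hx t ht htd
  set c : ℝ := (δ * m / (volume (cube a l)).toReal) ^ (1/(d:ℝ)) / (8 * Real.sqrt d * 3^d)
    with hc
  by_contra hcon
  push_neg at hcon
  have htl : t ≤ l := by
    have h1 : diam (E ∩ D) ≤ diam (cube a l) :=
      diam_mono (inter_subset_left.trans hEQ) (isCompact_Icc.isBounded)
    have h2 : diam (cube a l) ≤ l := by
      refine diam_le_of_forall_dist_le hl.le fun p hp q hq => (dist_pi_le_iff hl.le).2 fun i => ?_
      have hp1 := hp.1 i; have hp2 := hp.2 i; have hq1 := hq.1 i; have hq2 := hq.2 i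
      simp only at hp2 hq2
      rw [Real.dist_eq, abs_sub_le_iff]
      constructor <;> linarith
    linarith
  have hsub : E ∩ closedBall x t ⊆ ball x (c*t) := by
    rintro y ⟨hyE, hyB⟩
    rw [mem_closedBall] at hyB
    rw [mem_ball]
    by_contra hge
    push_neg at hge
    rw [dist_comm] at hge hyB
    exact absurd hyB (not_le.2 (hcon y hyE hge))
  have hct0 : 0 ≤ c * t := by
    refine mul_nonneg (div_nonneg (Real.rpow_nonneg ?_ _) (by positivity)) ht.le
    rw [hQtoReal]; positivity
  have hdens := hx.2 t ht htl
  have hle : γ * ENNReal.ofReal ((2*t/5)^d) ≤ ENNReal.ofReal ((2*(c*t))^d) := by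
    refine hdens.trans ?_
    calc volume (E ∩ closedBall x t) ≤ volume (closedBall x (c*t)) :=
          measure_mono (hsub.trans ball_subset_closedBall)
      _ = ENNReal.ofReal ((2*(c*t))^d) := by
          rw [Real.volume_pi_closedBall _ hct0, Fintype.card_fin]
  rw [hγdef, ← ENNReal.ofReal_mul hγr0.le,
    ENNReal.ofReal_le_ofReal_iff (by positivity)] at hle
  have hd0 : (d:ℝ) ≠ 0 := Nat.cast_ne_zero.2 hd.ne'
  have hsd : (1:ℝ) ≤ Real.sqrt d := Real.one_le_sqrt.2 (by exact_mod_cast hd)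
  have h3d : (3:ℝ) ≤ 3^d := by
    calc (3:ℝ) = 3^1 := (pow_one 3).symm
      _ ≤ 3^d := pow_le_pow_right₀ (by norm_num) hd
  have hbig : (15:ℝ)^d < (8*Real.sqrt d*3^d)^d := by
    refine pow_lt_pow_left₀ ?_ (by norm_num) hd.ne'
    nlinarith
  have hcpow : c ^ d = (δ * m / l^d) / (8*Real.sqrt d*3^d)^d := by
    rw [hc, hQtoReal, div_pow]
    congr 1
    rw [← Real.rpow_natCast ((δ * m / l^d) ^ (1/(d:ℝ))) d, ← Real.rpow_mul (by positivity),
      one_div, inv_mul_cancel₀ hd0, Real.rpow_one]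
  have hK : 0 < δ * m * (2*t)^d / l^d := by positivity
  have hden15 : (0:ℝ) < (15:ℝ)^d := by positivity
  have hdenbig : (0:ℝ) < (8*Real.sqrt d*3^d)^d := by positivity
  have e1 : (2*(c*t))^d = (δ * m * (2*t)^d / l^d) / (8*Real.sqrt d*3^d)^d := by
    have h : (2*(c*t))^d = c^d * (2*t)^d := by
      rw [← mul_pow]; ring_nf
    rw [h, hcpow]
    field_simp
  have e2 : γr * ((2*t/5)^d) = (δ * m * (2*t)^d / l^d) / 15^d := by
    have h15 : (15:ℝ)^d = 3^d * 5^d := by rw [← mul_pow]; norm_num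
    have h5 : ((5:ℝ))^d ≠ 0 := by positivity
    have h3 : ((3:ℝ))^d ≠ 0 := by positivity
    have hld : (l:ℝ)^d ≠ 0 := by positivity
    rw [hγrdef]
    field_simp [mul_pow, div_pow, h15]
    rw [div_pow]
    field_simp
    rw [h15]
    ring
  rw [e1, e2] at hle
  exact absurd hle (not_le.2 (div_lt_div_of_pos_left hK hden15 hbig))
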